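/- Fix x > 0 and suppose σ²(t) = ∫ z² g(t,z) ν(dz) is finite and continuous in a neighborhood of x. Then, as δ ↓ 0, E[ 4Z² (√(Y−x) − √(Y−x−δ))² 1_{Y>x+δ} ] is asymptotically equivalent to δ² log(1/δ) · σ²(x); that is, the ratio of the two quantities tends to 1 as δ ↓ 0 (when σ²(x) > 0), and the expectation is o(δ² log(1/δ)) when σ²(x) = 0. -/

import Mathlib

open Set MeasureTheory ProbabilityTheory Filter Metric
open scoped ENNReal NNReal Topology

/-- `σ²(t) = ∫ z² g(t,z) ν(dz)`. -/
noncomputable def sigsq (ν : Measure ℝ) (g : ℝ → ℝ → ℝ) (t : ℝ) : ℝ :=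
  ∫ z, z ^ 2 * g t z ∂ν

section VarianceAsymptoticsAux

open intervalIntegral


lemma ker_key {δ u : ℝ} (hδ : 0 < δ) (hu : 0 ≤ u) :
    (4 * (Real.sqrt (u + δ) - Real.sqrt u) ^ 2 ≤ 4 * δ ^ 2 / (u + δ)) ∧
    (2 * δ ^ 2 / (2 * u + δ) ≤ 4 * (Real.sqrt (u + δ) - Real.sqrt u) ^ 2) ∧
    (0 < u → 4 * (Real.sqrt (u + δ) - Real.sqrt u) ^ 2 ≤ δ ^ 2 / u) := by
  set s := Real.sqrt (u + δ) with hs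
  set t := Real.sqrt u with ht
  have hs2 : s ^ 2 = u + δ := Real.sq_sqrt (by linarith)
  have ht2 : t ^ 2 = u := Real.sq_sqrt hu
  have hsn : 0 ≤ s := Real.sqrt_nonneg _
  have htn : 0 ≤ t := Real.sqrt_nonneg _
  have hts : t ≤ s := Real.sqrt_le_sqrt (by linarith)
  have hid : (s - t) ^ 2 * (s + t) ^ 2 = δ ^ 2 := by nlinarith [hs2, ht2]
  have hsq : 0 ≤ (s - t) ^ 2 := sq_nonneg _
  have hD1 : u + δ ≤ (s + t) ^ 2 := by nlinarith [mul_nonneg hsn htn]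
  have hD2 : 4 * u ≤ (s + t) ^ 2 := by nlinarith
  have hD3 : (s + t) ^ 2 ≤ 4 * u + 2 * δ := by nlinarith
  refine ⟨?_, ?_, ?_⟩
  · rw [le_div_iff₀ (by linarith : (0:ℝ) < u + δ)]
    nlinarith [mul_le_mul_of_nonneg_left hD1 hsq]
  · rw [div_le_iff₀ (by linarith : (0:ℝ) < 2 * u + δ)]
    nlinarith [mul_le_mul_of_nonneg_left hD3 hsq]
  · intro hu0
    rw [le_div_iff₀ hu0]
    nlinarith [mul_le_mul_of_nonneg_left hD2 hsq]

lemma ker_le_lin {δ u : ℝ} (hδ : 0 < δ) (hu : 0 ≤ u) :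
    4 * (Real.sqrt (u + δ) - Real.sqrt u) ^ 2 ≤ 4 * δ := by
  refine le_trans (ker_key hδ hu).1 ?_
  rw [div_le_iff₀ (by linarith : (0:ℝ) < u + δ)]
  nlinarith


lemma kcont (δ : ℝ) : Continuous fun u : ℝ => 4 * (Real.sqrt (u + δ) - Real.sqrt u) ^ 2 :=
  continuous_const.mul (((Real.continuous_sqrt.comp (continuous_id.add continuous_const)).sub
    Real.continuous_sqrt).pow 2)

lemma int_two_inv {δ T : ℝ} (hδ : 0 < δ) (hT : 0 ≤ T) :
    ∫ u in (0:ℝ)..T, 2 * δ ^ 2 / (2 * u + δ) = δ ^ 2 * (Real.log (2 * T + δ) - Real.log δ) := by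
  have h1 : ∀ u : ℝ, 2 * δ ^ 2 / (2 * u + δ) = (2 * δ ^ 2) * (fun v : ℝ => v⁻¹) (2 * u + δ) := by
    intro u; simp [div_eq_mul_inv]
  simp_rw [h1]
  rw [intervalIntegral.integral_const_mul, intervalIntegral.integral_comp_mul_add
    (fun v : ℝ => v⁻¹) two_ne_zero δ]
  rw [integral_inv (by
    intro h
    rcases Set.mem_uIcc.1 h with ⟨h1, _⟩ | ⟨_, h2⟩ <;> nlinarith)]
  rw [Real.log_div (by nlinarith) (by nlinarith)]
  simp only [smul_eq_mul]
  ring_nf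

lemma int_one_inv {δ : ℝ} (hδ : 0 < δ) :
    ∫ u in (0:ℝ)..δ, 4 * δ ^ 2 / (u + δ) = δ ^ 2 * (4 * Real.log 2) := by
  have h1 : ∀ u : ℝ, 4 * δ ^ 2 / (u + δ) = (4 * δ ^ 2) * (fun v : ℝ => v⁻¹) (u + δ) := by
    intro u; simp [div_eq_mul_inv]
  simp_rw [h1]
  rw [intervalIntegral.integral_const_mul, intervalIntegral.integral_comp_add_right
    (fun v : ℝ => v⁻¹) δ]
  rw [integral_inv (by
    intro h
    rcases Set.mem_uIcc.1 h with ⟨h1, _⟩ | ⟨_, h2⟩ <;> nlinarith)]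
  have : (δ + δ) / (0 + δ) = 2 := by field_simp; ring
  rw [this]
  ring

lemma int_u_inv {δ T : ℝ} (hδ : 0 < δ) (hT : δ ≤ T) :
    ∫ u in δ..T, δ ^ 2 / u = δ ^ 2 * (Real.log T - Real.log δ) := by
  have h1 : ∀ u : ℝ, δ ^ 2 / u = δ ^ 2 * u⁻¹ := fun u => div_eq_mul_inv _ _
  simp_rw [h1]
  rw [intervalIntegral.integral_const_mul, integral_inv (by
    intro h
    rcases Set.mem_uIcc.1 h with ⟨h1, _⟩ | ⟨_, h2⟩ <;> nlinarith)]
  rw [Real.log_div (by nlinarith) (by nlinarith)]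

lemma J_bounds {δ r : ℝ} (hδ : 0 < δ) (hr : 0 < r) (hδr : δ ≤ r / 2) :
    δ ^ 2 * (Real.log r - Real.log δ) ≤
      (∫ u in (0:ℝ)..(r - δ), 4 * (Real.sqrt (u + δ) - Real.sqrt u) ^ 2) ∧
    (∫ u in (0:ℝ)..(r - δ), 4 * (Real.sqrt (u + δ) - Real.sqrt u) ^ 2) ≤
      δ ^ 2 * (Real.log r - Real.log δ + 4 * Real.log 2) := by
  have hT : δ ≤ r - δ := by linarith
  have hT0 : (0:ℝ) ≤ r - δ := by linarith
  have hκint : ∀ a b : ℝ, IntervalIntegrable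
      (fun u : ℝ => 4 * (Real.sqrt (u + δ) - Real.sqrt u) ^ 2) volume a b :=
    fun a b => (kcont δ).intervalIntegrable a b
  constructor
  · -- lower bound
    have hcmp : (∫ u in (0:ℝ)..(r - δ), 2 * δ ^ 2 / (2 * u + δ)) ≤
        ∫ u in (0:ℝ)..(r - δ), 4 * (Real.sqrt (u + δ) - Real.sqrt u) ^ 2 := by
      refine integral_mono_on hT0 ?_ (hκint 0 _) (fun u hu => (ker_key hδ hu.1).2.1)
      refine (ContinuousOn.div continuousOn_const (by fun_prop) ?_).intervalIntegrable
      intro u hu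
      rw [Set.uIcc_of_le hT0] at hu
      nlinarith [hu.1]
    rw [int_two_inv hδ hT0] at hcmp
    refine le_trans ?_ hcmp
    have : Real.log r ≤ Real.log (2 * (r - δ) + δ) := Real.log_le_log hr (by linarith)
    nlinarith [sq_nonneg δ]
  · -- upper bound
    rw [← intervalIntegral.integral_add_adjacent_intervals (hκint 0 δ) (hκint δ (r - δ))]
    have h1 : (∫ u in (0:ℝ)..δ, 4 * (Real.sqrt (u + δ) - Real.sqrt u) ^ 2) ≤
        δ ^ 2 * (4 * Real.log 2) := by
      rw [← int_one_inv hδ]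
      refine integral_mono_on hδ.le (hκint 0 δ) ?_ (fun u hu => (ker_key hδ hu.1).1)
      refine (ContinuousOn.div continuousOn_const (by fun_prop) ?_).intervalIntegrable
      intro u hu
      rw [Set.uIcc_of_le hδ.le] at hu
      nlinarith [hu.1]
    have h2 : (∫ u in δ..(r - δ), 4 * (Real.sqrt (u + δ) - Real.sqrt u) ^ 2) ≤
        δ ^ 2 * (Real.log r - Real.log δ) := by
      have : (∫ u in δ..(r - δ), 4 * (Real.sqrt (u + δ) - Real.sqrt u) ^ 2) ≤
          ∫ u in δ..(r - δ), δ ^ 2 / u := by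
        refine integral_mono_on hT (hκint δ _) ?_
          (fun u hu => (ker_key hδ (by nlinarith [hu.1] : (0:ℝ) ≤ u)).2.2 (by nlinarith [hu.1]))
        refine (ContinuousOn.div continuousOn_const (by fun_prop) ?_).intervalIntegrable
        intro u hu
        rw [Set.uIcc_of_le hT] at hu
        nlinarith [hu.1]
      rw [int_u_inv hδ hT] at this
      refine le_trans this ?_
      have : Real.log (r - δ) ≤ Real.log r := Real.log_le_log (by linarith) (by linarith)
      nlinarith [sq_nonneg δ]
    linarith

lemma expectation_eq
    {Ω : Type*} [MeasureSpace Ω] [IsProbabilityMeasure (ℙ : Measure Ω)]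
    (ν : Measure ℝ) [SigmaFinite ν]
    (g : ℝ → ℝ → ℝ) (hg_meas : Measurable (Function.uncurry g))
    (hg_nonneg : ∀ y z, 0 ≤ g y z)
    (Y Z : Ω → ℝ) (hY : Measurable Y) (hZ : Measurable Z)
    (hlaw : Measure.map (fun ω => (Y ω, Z ω)) ℙ
      = ((volume.restrict (Ici (0 : ℝ))).prod ν).withDensity
          (fun p => ENNReal.ofReal (g p.1 p.2)))
    (c₀ : ℝ) (hZbd : ∀ᵐ ω ∂ℙ, 0 ≤ Z ω ∧ Z ω ≤ c₀)
    (x : ℝ) (hx : 0 < x) (δ : ℝ) (hδ : 0 < δ) :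
    (∫ ω, if x + δ < Y ω then
        4 * Z ω ^ 2 * (Real.sqrt (Y ω - x) - Real.sqrt (Y ω - x - δ)) ^ 2
      else 0)
      = ∫ y in Ioi (x + δ),
          (4 * (Real.sqrt (y - x) - Real.sqrt (y - x - δ)) ^ 2) * sigsq ν g y ∧
    IntegrableOn (fun y =>
        (4 * (Real.sqrt (y - x) - Real.sqrt (y - x - δ)) ^ 2) * sigsq ν g y)
      (Ioi (x + δ)) volume := by
  set μ₁ := volume.restrict (Ici (0:ℝ)) with hμ₁
  set μ₂ := μ₁.prod ν with hμ₂
  have hYZ : Measurable fun ω => (Y ω, Z ω) := hY.prodMk hZ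
  set f : ℝ × ℝ → ℝ := fun p => if x + δ < p.1 then
      4 * p.2 ^ 2 * (Real.sqrt (p.1 - x) - Real.sqrt (p.1 - x - δ)) ^ 2 else 0 with hf
  have hfmeas : Measurable f :=
    Measurable.ite (measurableSet_lt measurable_const measurable_fst) (by fun_prop)
      measurable_const
  have hgm : Measurable fun p : ℝ × ℝ => g p.1 p.2 := hg_meas
  -- step 1 : rewrite expectation as integral over μ₂ with density
  have step1 : (∫ ω, if x + δ < Y ω then
        4 * Z ω ^ 2 * (Real.sqrt (Y ω - x) - Real.sqrt (Y ω - x - δ)) ^ 2 else 0)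
      = ∫ p, g p.1 p.2 * f p ∂μ₂ := by
    have e1 : (∫ ω, if x + δ < Y ω then
        4 * Z ω ^ 2 * (Real.sqrt (Y ω - x) - Real.sqrt (Y ω - x - δ)) ^ 2 else 0)
        = ∫ p, f p ∂(Measure.map (fun ω => (Y ω, Z ω)) ℙ) := by
      rw [integral_map hYZ.aemeasurable hfmeas.aestronglyMeasurable]
    rw [e1, hlaw]
    have e2 : (fun p : ℝ × ℝ => ENNReal.ofReal (g p.1 p.2))
        = fun p : ℝ × ℝ => ((Real.toNNReal (g p.1 p.2) : ℝ≥0) : ℝ≥0∞) := rfl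
    rw [e2, integral_withDensity_eq_integral_smul
      (f := fun p : ℝ × ℝ => Real.toNNReal (g p.1 p.2))
      (by exact measurable_real_toNNReal.comp hgm) f]
    congr 1
    ext p
    rw [NNReal.smul_def, Real.coe_toNNReal _ (hg_nonneg _ _), smul_eq_mul]
  -- total mass one
  have huniv : (∫⁻ p, ENNReal.ofReal (g p.1 p.2) ∂μ₂) = 1 := by
    have h1 : (μ₂.withDensity fun p => ENNReal.ofReal (g p.1 p.2)) Set.univ
        = ∫⁻ p, ENNReal.ofReal (g p.1 p.2) ∂μ₂ := by
      rw [withDensity_apply _ MeasurableSet.univ, Measure.restrict_univ]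
    rw [← h1, ← hlaw, Measure.map_apply hYZ MeasurableSet.univ, Set.preimage_univ,
      measure_univ]
  -- g integrable on the product
  have hg_int : Integrable (fun p : ℝ × ℝ => g p.1 p.2) μ₂ := by
    refine ⟨hgm.aestronglyMeasurable, ?_⟩
    rw [hasFiniteIntegral_iff_norm]
    have : ∀ p : ℝ × ℝ, ENNReal.ofReal ‖g p.1 p.2‖ = ENNReal.ofReal (g p.1 p.2) := by
      intro p; rw [Real.norm_of_nonneg (hg_nonneg _ _)]
    simp_rw [this, huniv]
    exact ENNReal.one_lt_top
  -- a.e. bound on z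
  have hzbd2 : ∀ᵐ p ∂μ₂, g p.1 p.2 ≠ 0 → 0 ≤ p.2 ∧ p.2 ≤ c₀ := by
    set B : Set (ℝ × ℝ) := {p : ℝ × ℝ | 0 ≤ p.2 ∧ p.2 ≤ c₀}ᶜ with hBdef
    have hB : MeasurableSet B :=
      ((measurableSet_le measurable_const measurable_snd).inter
        (measurableSet_le measurable_snd measurable_const)).compl
    have hρB : (μ₂.withDensity fun p => ENNReal.ofReal (g p.1 p.2)) B = 0 := by
      rw [← hlaw, Measure.map_apply hYZ hB]
      have : (fun ω => (Y ω, Z ω)) ⁻¹' B = {ω | ¬(0 ≤ Z ω ∧ Z ω ≤ c₀)} := rfl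
      rw [this]
      exact ae_iff.1 hZbd
    rw [withDensity_apply _ hB] at hρB
    have h0 : (fun p : ℝ × ℝ => ENNReal.ofReal (g p.1 p.2)) =ᵐ[μ₂.restrict B] 0 :=
      (lintegral_eq_zero_iff (ENNReal.measurable_ofReal.comp hgm)).1 hρB
    have h1 : ∀ᵐ p ∂μ₂, p ∈ B → ENNReal.ofReal (g p.1 p.2) = 0 :=
      (ae_restrict_iff' hB).1 h0
    filter_upwards [h1] with p hp hgne
    by_contra hmem
    have : ENNReal.ofReal (g p.1 p.2) = 0 := hp hmem
    rw [ENNReal.ofReal_eq_zero] at this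
    exact hgne (le_antisymm this (hg_nonneg _ _))
  -- integrability of the product integrand
  have hInt : Integrable (fun p : ℝ × ℝ => g p.1 p.2 * f p) μ₂ := by
    refine Integrable.mono' (hg_int.const_mul (4 * δ * c₀ ^ 2))
      (hgm.mul hfmeas).aestronglyMeasurable ?_
    filter_upwards [hzbd2] with p hp
    rcases eq_or_ne (g p.1 p.2) 0 with hg0 | hg0
    · simp [hg0]
    · obtain ⟨hz0, hzc⟩ := hp hg0
      have hgpos : 0 ≤ g p.1 p.2 := hg_nonneg _ _
      by_cases hy : x + δ < p.1
      · have hb : (0:ℝ) ≤ p.1 - x - δ := by linarith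
        have hker : 4 * (Real.sqrt (p.1 - x) - Real.sqrt (p.1 - x - δ)) ^ 2 ≤ 4 * δ := by
          have h0 := ker_le_lin hδ hb
          have h' : p.1 - x - δ + δ = p.1 - x := by ring
          rw [h'] at h0
          exact h0
        have hfv : f p = 4 * p.2 ^ 2 * (Real.sqrt (p.1 - x) - Real.sqrt (p.1 - x - δ)) ^ 2 := by
          simp [hf, hy]
        have hz2 : p.2 ^ 2 ≤ c₀ ^ 2 := by nlinarith
        have hfnn : 0 ≤ f p := by rw [hfv]; positivity
        rw [Real.norm_of_nonneg (mul_nonneg hgpos hfnn)]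
        have : f p ≤ 4 * δ * c₀ ^ 2 := by
          rw [hfv]
          nlinarith [sq_nonneg (Real.sqrt (p.1 - x) - Real.sqrt (p.1 - x - δ)), sq_nonneg p.2]
        nlinarith
      · have hfv : f p = 0 := by simp [hf, hy]
        simp [hfv]
        positivity
  -- Fubini and inner integral
  have hinner : ∀ y : ℝ, (∫ z, g y z * f (y, z) ∂ν)
      = Set.indicator (Ioi (x + δ)) (fun y =>
          (4 * (Real.sqrt (y - x) - Real.sqrt (y - x - δ)) ^ 2) * sigsq ν g y) y := by
    intro y
    by_cases hy : x + δ < y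
    · rw [Set.indicator_of_mem (Set.mem_Ioi.2 hy)]
      have : ∀ z : ℝ, g y z * f (y, z)
          = (4 * (Real.sqrt (y - x) - Real.sqrt (y - x - δ)) ^ 2) * (z ^ 2 * g y z) := by
        intro z
        simp only [hf, hy, if_true]
        ring
      simp_rw [this]
      rw [MeasureTheory.integral_const_mul]
      rfl
    · rw [Set.indicator_of_notMem (by simpa using hy)]
      have : ∀ z : ℝ, g y z * f (y, z) = 0 := by
        intro z; simp [hf, hy]
      simp_rw [this]
      simp
  have houter : Integrable (fun y => ∫ z, g y z * f (y, z) ∂ν) μ₁ :=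
    hInt.integral_prod_left
  have hres : μ₁.restrict (Ioi (x + δ)) = volume.restrict (Ioi (x + δ)) := by
    rw [hμ₁, Measure.restrict_restrict measurableSet_Ioi]
    have hss : Ioi (x + δ) ∩ Ici (0:ℝ) = Ioi (x + δ) := by
      apply Set.inter_eq_self_of_subset_left
      intro y hy
      rw [Set.mem_Ioi] at hy
      exact Set.mem_Ici.2 (by linarith)
    rw [hss]
  constructor
  · rw [step1, hμ₂, integral_prod _ hInt]
    simp_rw [hinner]
    rw [MeasureTheory.integral_indicator measurableSet_Ioi]
    rw [← hres]
  · have : Integrable (Set.indicator (Ioi (x + δ)) (fun y =>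
        (4 * (Real.sqrt (y - x) - Real.sqrt (y - x - δ)) ^ 2) * sigsq ν g y)) μ₁ := by
      have := houter
      simp_rw [hinner] at this
      exact this
    have h2 := (integrable_indicator_iff measurableSet_Ioi).1 this
    rw [IntegrableOn, hres] at h2
    exact h2

lemma density_facts
    {Ω : Type*} [MeasureSpace Ω] [IsProbabilityMeasure (ℙ : Measure Ω)]
    (ν : Measure ℝ) [SigmaFinite ν]
    (g : ℝ → ℝ → ℝ) (hg_meas : Measurable (Function.uncurry g))
    (hg_nonneg : ∀ y z, 0 ≤ g y z)
    (Y Z : Ω → ℝ) (hY : Measurable Y) (hZ : Measurable Z)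
    (hlaw : Measure.map (fun ω => (Y ω, Z ω)) ℙ
      = ((volume.restrict (Ici (0 : ℝ))).prod ν).withDensity
          (fun p => ENNReal.ofReal (g p.1 p.2)))
    (c₀ : ℝ) (hZbd : ∀ᵐ ω ∂ℙ, 0 ≤ Z ω ∧ Z ω ≤ c₀) :
    (∀ᵐ y ∂(volume.restrict (Ici (0:ℝ))), sigsq ν g y ≤ c₀ ^ 2 * ∫ z, g y z ∂ν) ∧
    Integrable (fun y => ∫ z, g y z ∂ν) (volume.restrict (Ici (0:ℝ))) ∧
    (∫ y in Ici (0:ℝ), ∫ z, g y z ∂ν) ≤ 1 := by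
  set μ₁ := volume.restrict (Ici (0:ℝ)) with hμ₁
  set μ₂ := μ₁.prod ν with hμ₂
  have hYZ : Measurable fun ω => (Y ω, Z ω) := hY.prodMk hZ
  have hgm : Measurable fun p : ℝ × ℝ => g p.1 p.2 := hg_meas
  have huniv : (∫⁻ p, ENNReal.ofReal (g p.1 p.2) ∂μ₂) = 1 := by
    have h1 : (μ₂.withDensity fun p => ENNReal.ofReal (g p.1 p.2)) Set.univ
        = ∫⁻ p, ENNReal.ofReal (g p.1 p.2) ∂μ₂ := by
      rw [withDensity_apply _ MeasurableSet.univ, Measure.restrict_univ]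
    rw [← h1, ← hlaw, Measure.map_apply hYZ MeasurableSet.univ, Set.preimage_univ,
      measure_univ]
  have hg_int : Integrable (fun p : ℝ × ℝ => g p.1 p.2) μ₂ := by
    refine ⟨hgm.aestronglyMeasurable, ?_⟩
    rw [hasFiniteIntegral_iff_norm]
    have : ∀ p : ℝ × ℝ, ENNReal.ofReal ‖g p.1 p.2‖ = ENNReal.ofReal (g p.1 p.2) := by
      intro p; rw [Real.norm_of_nonneg (hg_nonneg _ _)]
    simp_rw [this, huniv]
    exact ENNReal.one_lt_top
  have hzbd2 : ∀ᵐ p ∂μ₂, g p.1 p.2 ≠ 0 → 0 ≤ p.2 ∧ p.2 ≤ c₀ := by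
    set B : Set (ℝ × ℝ) := {p : ℝ × ℝ | 0 ≤ p.2 ∧ p.2 ≤ c₀}ᶜ with hBdef
    have hB : MeasurableSet B :=
      ((measurableSet_le measurable_const measurable_snd).inter
        (measurableSet_le measurable_snd measurable_const)).compl
    have hρB : (μ₂.withDensity fun p => ENNReal.ofReal (g p.1 p.2)) B = 0 := by
      rw [← hlaw, Measure.map_apply hYZ hB]
      have : (fun ω => (Y ω, Z ω)) ⁻¹' B = {ω | ¬(0 ≤ Z ω ∧ Z ω ≤ c₀)} := rfl
      rw [this]
      exact ae_iff.1 hZbd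
    rw [withDensity_apply _ hB] at hρB
    have h0 : (fun p : ℝ × ℝ => ENNReal.ofReal (g p.1 p.2)) =ᵐ[μ₂.restrict B] 0 :=
      (lintegral_eq_zero_iff (ENNReal.measurable_ofReal.comp hgm)).1 hρB
    have h1 : ∀ᵐ p ∂μ₂, p ∈ B → ENNReal.ofReal (g p.1 p.2) = 0 :=
      (ae_restrict_iff' hB).1 h0
    filter_upwards [h1] with p hp hgne
    by_contra hmem
    have : ENNReal.ofReal (g p.1 p.2) = 0 := hp hmem
    rw [ENNReal.ofReal_eq_zero] at this
    exact hgne (le_antisymm this (hg_nonneg _ _))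
  have h_slice : ∀ᵐ y ∂μ₁, Integrable (fun z => g y z) ν := hg_int.prod_right_ae
  have h_zae : ∀ᵐ y ∂μ₁, ∀ᵐ z ∂ν, g y z ≠ 0 → 0 ≤ z ∧ z ≤ c₀ :=
    Measure.ae_ae_of_ae_prod hzbd2
  refine ⟨?_, ?_, ?_⟩
  · filter_upwards [h_slice, h_zae] with y hyint hyz
    have hGnn : (0:ℝ) ≤ ∫ z, g y z ∂ν := integral_nonneg fun z => hg_nonneg y z
    by_cases hint : Integrable (fun z => z ^ 2 * g y z) ν
    · have hb : sigsq ν g y ≤ ∫ z, c₀ ^ 2 * g y z ∂ν := by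
        refine integral_mono_ae hint (hyint.const_mul (c₀ ^ 2)) ?_
        filter_upwards [hyz] with z hz
        rcases eq_or_ne (g y z) 0 with h0 | h0
        · simp [h0]
        · obtain ⟨h1, h2⟩ := hz h0
          nlinarith [mul_nonneg (by nlinarith : (0:ℝ) ≤ c₀ ^ 2 - z ^ 2) (hg_nonneg y z)]
      rwa [MeasureTheory.integral_const_mul] at hb
    · have : sigsq ν g y = 0 := integral_undef hint
      rw [this]
      positivity
  · exact hg_int.integral_prod_left
  · have h2 : (∫ p, g p.1 p.2 ∂μ₂) = ∫ y, ∫ z, g y z ∂ν ∂μ₁ := integral_prod _ hg_int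
    have h3 : (∫ p, g p.1 p.2 ∂μ₂) = 1 := by
      rw [integral_eq_lintegral_of_nonneg_ae (ae_of_all _ fun p : ℝ × ℝ => hg_nonneg p.1 p.2)
        hgm.aestronglyMeasurable]
      simp_rw [huniv]
      simp
    calc (∫ y in Ici (0:ℝ), ∫ z, g y z ∂ν) = ∫ y, ∫ z, g y z ∂ν ∂μ₁ := rfl
      _ = 1 := by rw [← h2, h3]
      _ ≤ 1 := le_refl 1

end VarianceAsymptoticsAux

set_option maxHeartbeats 1000000

/-- The key variance computation in the proof of Theorem 3.2: for `x > 0` with `σ²`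
finite and continuous near `x`, as `δ ↓ 0`,
`E[4Z²(√(Y−x) − √(Y−x−δ))² 1_{Y>x+δ}] / (δ² log(1/δ)) → σ²(x)`
(asymptotic equivalence to `δ² log(1/δ) σ²(x)` when `σ²(x) > 0`, and `o(δ² log(1/δ))`
when `σ²(x) = 0`). -/
theorem variance_asymptotics
    {Ω : Type*} [MeasureSpace Ω] [IsProbabilityMeasure (ℙ : Measure Ω)]
    (ν : Measure ℝ) [SigmaFinite ν] (hν : ν (Iio 0) = 0)
    (g : ℝ → ℝ → ℝ) (hg_meas : Measurable (Function.uncurry g))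
    (hg_nonneg : ∀ y z, 0 ≤ g y z)
    (Y Z : Ω → ℝ) (hY : Measurable Y) (hZ : Measurable Z)
    (hlaw : Measure.map (fun ω => (Y ω, Z ω)) ℙ
      = ((volume.restrict (Ici (0 : ℝ))).prod ν).withDensity
          (fun p => ENNReal.ofReal (g p.1 p.2)))
    (c₀ : ℝ) (hZbd : ∀ᵐ ω ∂ℙ, 0 ≤ Z ω ∧ Z ω ≤ c₀)
    (x : ℝ) (hx : 0 < x) (ε : ℝ) (hε : 0 < ε)
    (hfin : ∀ t ∈ ball x ε, Integrable (fun z => z ^ 2 * g t z) ν)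
    (hcont : ContinuousOn (sigsq ν g) (ball x ε)) :
    Tendsto (fun δ : ℝ =>
        (∫ ω, if x + δ < Y ω then
            4 * Z ω ^ 2 * (Real.sqrt (Y ω - x) - Real.sqrt (Y ω - x - δ)) ^ 2
          else 0)
          / (δ ^ 2 * Real.log (1 / δ)))
      (𝓝[>] 0) (𝓝 (sigsq ν g x)) := by
  have hSnn : ∀ y, 0 ≤ sigsq ν g y :=
    fun y => integral_nonneg fun z => mul_nonneg (sq_nonneg z) (hg_nonneg y z)
  obtain ⟨hSG, hGint, hG1⟩ := density_facts ν g hg_meas hg_nonneg Y Z hY hZ hlaw c₀ hZbd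
  have hCx : ContinuousAt (sigsq ν g) x :=
    hcont.continuousAt (isOpen_ball.mem_nhds (mem_ball_self hε))
  rw [Metric.tendsto_nhdsWithin_nhds]
  intro η hη
  obtain ⟨d₁, hd₁, hd₁'⟩ := Metric.continuousAt_iff.1 hCx (η / 2) (by linarith)
  set r : ℝ := min (d₁ / 2) (ε / 2) with hrdef
  have hr : 0 < r := lt_min (by linarith) (by linarith)
  have hosc : ∀ y ∈ Icc x (x + r), |sigsq ν g y - sigsq ν g x| ≤ η / 2 := by
    intro y hy
    have h1 : dist y x < d₁ := by
      rw [Real.dist_eq, abs_of_nonneg (by linarith [hy.1])]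
      have h2 : r ≤ d₁ / 2 := min_le_left _ _
      linarith [hy.2]
    have := hd₁' h1
    rw [Real.dist_eq] at this
    linarith
  set S : ℝ → ℝ := sigsq ν g with hSdef
  set C₁ : ℝ := |Real.log r| + 4 * Real.log 2 with hC₁def
  have hC₁ : 0 ≤ C₁ := by
    have := Real.log_nonneg (by norm_num : (1:ℝ) ≤ 2)
    have := abs_nonneg (Real.log r)
    linarith
  set Cta : ℝ := 4 * c₀ ^ 2 / r with hCtadef
  have hCta : 0 ≤ Cta := by positivity
  set A : ℝ := (η / 2) * C₁ + |S x| * C₁ + Cta with hAdef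
  have hA : 0 ≤ A := by
    have h1 : (0:ℝ) ≤ η / 2 * C₁ := mul_nonneg (by linarith) hC₁
    have h2 : (0:ℝ) ≤ |S x| * C₁ := mul_nonneg (abs_nonneg _) hC₁
    rw [hAdef]; exact add_nonneg (add_nonneg h1 h2) hCta
  refine ⟨min (r / 2) (Real.exp (-((2 * A + η) / η))), lt_min (by linarith) (Real.exp_pos _),
    ?_⟩
  intro δ hδmem hδd
  have hδ : 0 < δ := hδmem
  rw [Real.dist_eq, sub_zero, abs_of_pos hδ] at hδd
  have hδr : δ ≤ r / 2 := le_of_lt (lt_of_lt_of_le hδd (min_le_left _ _))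
  have hδe : δ < Real.exp (-((2 * A + η) / η)) := lt_of_lt_of_le hδd (min_le_right _ _)
  set L : ℝ := Real.log (1 / δ) with hLdef
  have hLe : L = -Real.log δ := by rw [hLdef, one_div, Real.log_inv]
  have hLbig : (2 * A + η) / η < L := by
    have h1 := Real.log_lt_log hδ hδe
    rw [Real.log_exp] at h1
    rw [hLe]; linarith
  have hηL : 2 * A + η < η * L := by
    rw [div_lt_iff₀ hη] at hLbig
    linarith [hLbig]
  have hL0 : 0 < L := by
    have : 0 ≤ (2 * A + η) / η := by positivity
    linarith
  obtain ⟨hEq, hIntOn⟩ := expectation_eq ν g hg_meas hg_nonneg Y Z hY hZ hlaw c₀ hZbd x hx δ hδ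
  set k : ℝ → ℝ := fun y => 4 * (Real.sqrt (y - x) - Real.sqrt (y - x - δ)) ^ 2 with hk
  have hkcont : Continuous k :=
    continuous_const.mul (((Real.continuous_sqrt.comp ((continuous_id.sub continuous_const))).sub
      (Real.continuous_sqrt.comp ((continuous_id.sub continuous_const).sub
        continuous_const))).pow 2)
  have hknn : ∀ y, 0 ≤ k y := fun y => by rw [hk]; positivity
  have hxr : x + δ ≤ x + r := by linarith
  have hIoc : IntegrableOn (fun y => k y * S y) (Ioc (x + δ) (x + r)) volume :=
    hIntOn.mono_set (fun y hy => hy.1)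
  have hIoi2 : IntegrableOn (fun y => k y * S y) (Ioi (x + r)) volume :=
    hIntOn.mono_set (fun y hy => lt_of_le_of_lt (by linarith : x + δ ≤ x + r) hy)
  set N : ℝ := ∫ y in Ioc (x + δ) (x + r), k y * S y with hNdef
  set T : ℝ := ∫ y in Ioi (x + r), k y * S y with hTdef
  have hEsplit : (∫ y in Ioi (x + δ), k y * S y) = N + T := by
    rw [← Set.Ioc_union_Ioi_eq_Ioi hxr,
      setIntegral_union (Set.Ioc_disjoint_Ioi le_rfl) measurableSet_Ioi hIoc hIoi2]
  -- kernel integral J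
  set J : ℝ := ∫ y in Ioc (x + δ) (x + r), k y with hJdef
  have hkint : IntegrableOn k (Ioc (x + δ) (x + r)) volume := hkcont.integrableOn_Ioc
  have hJeq : J = ∫ u in (0:ℝ)..(r - δ), 4 * (Real.sqrt (u + δ) - Real.sqrt u) ^ 2 := by
    rw [hJdef, ← intervalIntegral.integral_of_le hxr]
    have h2 := intervalIntegral.integral_comp_add_right (a := 0) (b := r - δ) k (x + δ)
    rw [show (0:ℝ) + (x + δ) = x + δ by ring, show r - δ + (x + δ) = x + r by ring] at h2
    rw [← h2]
    apply intervalIntegral.integral_congr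
    intro u _
    rw [hk]
    simp only
    rw [show u + (x + δ) - x - δ = u by ring, show u + (x + δ) - x = u + δ by ring]
  obtain ⟨hJlo, hJhi⟩ := J_bounds hδ hr hδr
  rw [← hJeq] at hJlo hJhi
  have hlog2 : 0 ≤ Real.log 2 := Real.log_nonneg (by norm_num)
  have hJabs : |J - δ ^ 2 * L| ≤ δ ^ 2 * C₁ := by
    rw [abs_le]
    constructor
    · nlinarith [neg_abs_le (Real.log r), sq_nonneg δ, hLe]
    · nlinarith [le_abs_self (Real.log r), sq_nonneg δ, hLe]
  have hJub : J ≤ δ ^ 2 * (L + C₁) := by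
    nlinarith [le_abs_self (J - δ ^ 2 * L), hJabs, sq_nonneg δ]
  -- near-part error
  have hNerr : |N - S x * J| ≤ (η / 2) * J := by
    have hSxk : IntegrableOn (fun y => S x * k y) (Ioc (x + δ) (x + r)) volume :=
      hkint.const_mul (S x)
    have e1 : S x * J = ∫ y in Ioc (x + δ) (x + r), S x * k y := by
      rw [hJdef]; exact (integral_const_mul (S x) fun y => k y).symm
    rw [e1, ← integral_sub hIoc hSxk]
    have e2 : (η / 2) * J = ∫ y in Ioc (x + δ) (x + r), (η / 2) * k y := by
      rw [hJdef]; exact (integral_const_mul (η / 2) fun y => k y).symm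
    rw [e2]
    have h5 : |∫ y in Ioc (x + δ) (x + r), (k y * S y - S x * k y)|
        ≤ ∫ y in Ioc (x + δ) (x + r), |k y * S y - S x * k y| := by
      simpa [Real.norm_eq_abs] using
        norm_integral_le_integral_norm (μ := volume.restrict (Ioc (x + δ) (x + r)))
          (fun y => k y * S y - S x * k y)
    refine le_trans h5 ?_
    refine setIntegral_mono_on ((hIoc.sub hSxk).abs) (hkint.const_mul (η / 2))
      measurableSet_Ioc ?_
    intro y hy
    have hyIcc : y ∈ Icc x (x + r) := ⟨by linarith [hy.1], hy.2⟩
    have h3 := hosc y hyIcc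
    have h4 : |k y * S y - S x * k y| = k y * |S y - S x| := by
      rw [show k y * S y - S x * k y = k y * (S y - S x) by ring, abs_mul,
        abs_of_nonneg (hknn y)]
    rw [h4]
    calc k y * |S y - S x| ≤ k y * (η / 2) :=
          mul_le_mul_of_nonneg_left h3 (hknn y)
      _ = (η / 2) * k y := by ring
  -- tail bound
  have hTnn : 0 ≤ T :=
    setIntegral_nonneg measurableSet_Ioi fun y _ => mul_nonneg (hknn y) (hSnn y)
  have hsub : Ioi (x + r) ⊆ Ici (0:ℝ) := fun y hy => le_of_lt (lt_trans (by linarith : (0:ℝ) < x + r) hy)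
  have hTle : T ≤ Cta * δ ^ 2 := by
    set G : ℝ → ℝ := fun y => ∫ z, g y z ∂ν with hGdef
    have hGnn : ∀ y, 0 ≤ G y := fun y => integral_nonneg fun z => hg_nonneg y z
    have hGon : IntegrableOn G (Ici (0:ℝ)) volume := hGint
    have hGIoi : IntegrableOn G (Ioi (x + r)) volume := hGon.mono_set hsub
    have hSG' : ∀ᵐ y ∂(volume.restrict (Ioi (x + r))), S y ≤ c₀ ^ 2 * G y :=
      ae_restrict_of_ae_restrict_of_subset hsub hSG
    have step1 : T ≤ ∫ y in Ioi (x + r), (4 * δ ^ 2 / r * c₀ ^ 2) * G y := by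
      refine integral_mono_ae hIoi2 (hGIoi.const_mul _) ?_
      filter_upwards [hSG', ae_restrict_mem measurableSet_Ioi] with y hy1 hy2
      have hyr : x + r < y := hy2
      have hu : (0:ℝ) ≤ y - x - δ := by linarith
      have h0 := (ker_key hδ hu).1
      rw [show y - x - δ + δ = y - x by ring] at h0
      have hky : k y ≤ 4 * δ ^ 2 / r := by
        refine le_trans h0 ?_
        exact div_le_div_of_nonneg_left (by positivity) hr (by linarith)
      calc k y * S y ≤ (4 * δ ^ 2 / r) * S y :=
            mul_le_mul_of_nonneg_right hky (hSnn y)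
        _ ≤ (4 * δ ^ 2 / r) * (c₀ ^ 2 * G y) :=
            mul_le_mul_of_nonneg_left hy1 (by positivity)
        _ = (4 * δ ^ 2 / r * c₀ ^ 2) * G y := by ring
    have step2 : (∫ y in Ioi (x + r), (4 * δ ^ 2 / r * c₀ ^ 2) * G y)
        ≤ (4 * δ ^ 2 / r * c₀ ^ 2) * 1 := by
      rw [integral_const_mul]
      refine mul_le_mul_of_nonneg_left ?_ (by positivity)
      refine le_trans ?_ hG1
      refine setIntegral_mono_set hGon (ae_of_all _ hGnn) (HasSubset.Subset.eventuallyLE hsub)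
    refine le_trans step1 (le_trans step2 (le_of_eq ?_))
    rw [hCtadef]; ring
  -- assemble
  have hδ2L : 0 < δ ^ 2 * L := by positivity
  show dist ((∫ ω, if x + δ < Y ω then
      4 * Z ω ^ 2 * (Real.sqrt (Y ω - x) - Real.sqrt (Y ω - x - δ)) ^ 2 else 0)
      / (δ ^ 2 * Real.log (1 / δ))) (sigsq ν g x) < η
  rw [Real.dist_eq, hEq, hEsplit, ← hLdef, ← hSdef]
  have e3 : (N + T) / (δ ^ 2 * L) - S x = ((N + T) - S x * (δ ^ 2 * L)) / (δ ^ 2 * L) := by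
    rw [sub_div, mul_div_assoc, div_self (ne_of_gt hδ2L), mul_one]
  rw [e3, abs_div, abs_of_pos hδ2L, div_lt_iff₀ hδ2L]
  clear_value N T J A C₁ Cta L S k
  have habs : |(N + T) - S x * (δ ^ 2 * L)| ≤ |N - S x * J| + |S x| * |J - δ ^ 2 * L| + |T| := by
    have e4 : (N + T) - S x * (δ ^ 2 * L) = (N - S x * J) + S x * (J - δ ^ 2 * L) + T := by
      ring
    rw [e4]
    refine le_trans (abs_add_le _ _) ?_
    have := abs_add_le (N - S x * J) (S x * (J - δ ^ 2 * L))
    rw [abs_mul] at this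
    linarith
  have hTabs : |T| = T := abs_of_nonneg hTnn
  have hnum : |(N + T) - S x * (δ ^ 2 * L)| ≤ (η / 2) * (δ ^ 2 * L) + A * δ ^ 2 := by
    have b1 : |N - S x * J| ≤ (η / 2) * (δ ^ 2 * (L + C₁)) :=
      le_trans hNerr (mul_le_mul_of_nonneg_left hJub (by linarith))
    have b2 : |S x| * |J - δ ^ 2 * L| ≤ |S x| * (δ ^ 2 * C₁) :=
      mul_le_mul_of_nonneg_left hJabs (abs_nonneg _)
    rw [hTabs] at habs
    rw [hAdef]
    calc |(N + T) - S x * (δ ^ 2 * L)| ≤ |N - S x * J| + |S x| * |J - δ ^ 2 * L| + T := habs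
      _ ≤ (η / 2) * (δ ^ 2 * (L + C₁)) + |S x| * (δ ^ 2 * C₁) + Cta * δ ^ 2 :=
          add_le_add (add_le_add b1 b2) hTle
      _ = (η / 2) * (δ ^ 2 * L) + (η / 2 * C₁ + |S x| * C₁ + Cta) * δ ^ 2 := by ring
  have hkey : A * δ ^ 2 < (η / 2) * (δ ^ 2 * L) := by
    have hδ2 : 0 < δ ^ 2 := pow_pos hδ 2
    nlinarith [mul_lt_mul_of_pos_left hηL hδ2, mul_pos hδ2 hη]
  calc |(N + T) - S x * (δ ^ 2 * L)| ≤ (η / 2) * (δ ^ 2 * L) + A * δ ^ 2 := hnum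
    _ < (η / 2) * (δ ^ 2 * L) + (η / 2) * (δ ^ 2 * L) := by linarith
    _ = η * (δ ^ 2 * L) := by ring
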